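/- Let S, T be trees and let U ↪ S ⊗ T be a subtree (a tree with an injective broad poset map into S ⊗ T). Then U is full (i.e. the broad relations among elements of U in S ⊗ T all hold in U) if and only if for each leaf l of U it is not the case that ε ≤ φ(l) in S ⊗ T. -/
import Mathlib


universe u

namespace BroadPaper

/-- A broad relation on `X`: a relation between finite unordered tuples
(multisets) over `X` and elements of `X`. -/
abbrev Rel (X : Type u) : Type u := Multiset X → X → Prop

variable {X : Type u} {Y : Type u} {A : Type u} {B : Type u} {Z : Type u}

/-- Broad transitivity: if `f₁ ⋯ fₙ ≤ e` and `g̲ᵢ ≤ fᵢ` then `g̲₁ ⋯ g̲ₙ ≤ e`,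
encoded via a multiset of pairs `(g̲ᵢ, fᵢ)`. -/
def BTrans (r : Rel X) : Prop :=
  ∀ (p : Multiset (Multiset X × X)) (e : X),
    r (p.map Prod.snd) e → (∀ q ∈ p, r q.1 q.2) → r ((p.map Prod.fst).sum) e

/-- A pre-broad poset: reflexivity plus broad transitivity. -/
def IsPreBroad (r : Rel X) : Prop := (∀ e : X, r {e} e) ∧ BTrans r

/-- A (commutative) broad poset: a pre-broad poset satisfying antisymmetry. -/
def IsBroad (r : Rel X) : Prop :=
  IsPreBroad r ∧ ∀ e f : X, r {e} f → r {f} e → e = f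

/-- Simplicity: letters in any broad relation are pairwise distinct. -/
def Simple (r : Rel X) : Prop := ∀ fs e, r fs e → fs.Nodup

/-- The descendant relation `f ≤_d e`. -/
def descends (r : Rel X) (f e : X) : Prop := ∃ fs, r fs e ∧ f ∈ fs

def Comparable (r : Rel X) (f g : X) : Prop := descends r f g ∨ descends r g f

def Incomp (r : Rel X) (f g : X) : Prop := ¬ descends r f g ∧ ¬ descends r g f

/-- Blockwise extension of a broad relation to a relation between tuples:
`fs ≤ es` iff `fs = f̲₁ ⋯ f̲ₖ`, `es = e₁ ⋯ eₖ` with `f̲ᵢ ≤ eᵢ`. -/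
def tupleLE (r : Rel X) (fs es : Multiset X) : Prop :=
  ∃ p : Multiset (Multiset X × X),
    p.map Prod.snd = es ∧ (p.map Prod.fst).sum = fs ∧ ∀ q ∈ p, r q.1 q.2

/-- A leaf: no tuple strictly below `e`. -/
def IsLeaf (r : Rel X) (e : X) : Prop := ¬ ∃ fs, r fs e ∧ fs ≠ ({e} : Multiset X)

/-- `fs` is the maximum tuple strictly below `e` (written `e^↑`).
If `fs ≠ 0`, `e` is a node; if `fs = 0`, `e` is a stump. -/
def upTuple (r : Rel X) (e : X) (fs : Multiset X) : Prop :=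
  (r fs e ∧ fs ≠ ({e} : Multiset X)) ∧
    ∀ gs, r gs e → gs ≠ ({e} : Multiset X) → tupleLE r gs fs

def IsStump (r : Rel X) (e : X) : Prop := upTuple r e 0

/-- A dendroidally ordered set (tree): a finite simple broad poset in which
every element is a leaf, node or stump, with a `≤_d`-maximum (root). -/
def IsTree (r : Rel X) : Prop :=
  IsBroad r ∧ Finite X ∧ Simple r ∧
    (∀ e : X, IsLeaf r e ∨ ∃ fs, upTuple r e fs) ∧
    ∃ rt : X, ∀ e, descends r e rt

def IsMaxEl (r : Rel X) (e : X) : Prop := ∀ s, descends r e s → s = e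

/-- A forestially ordered set (forest): each element has a unique
`≤_d`-maximal element above it. -/
def IsForest (r : Rel X) : Prop :=
  IsBroad r ∧ Finite X ∧ Simple r ∧
    (∀ e : X, IsLeaf r e ∨ ∃ fs, upTuple r e fs) ∧
    ∀ e : X, ∃! rt : X, IsMaxEl r rt ∧ descends r e rt

/-- A map of broad posets: preserves broad relations (letterwise on tuples). -/
def BroadHom (r : Rel X) (r' : Rel Y) (φ : X → Y) : Prop :=
  ∀ fs e, r fs e → r' (fs.map φ) (φ e)

/-- `rs` is the root tuple: the tuple of `≤_d`-maximal elements (no repeats). -/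
def IsRootTuple (r : Rel X) (rs : Multiset X) : Prop :=
  rs.Nodup ∧ ∀ x, x ∈ rs ↔ IsMaxEl r x

/-- Independent map of forests: `φ(r̲_F)·e̲ ≤ r̲_{F'}` for some tuple `e̲`. -/
def Independent (r : Rel X) (r' : Rel Y) (φ : X → Y) : Prop :=
  ∃ (rs : Multiset X) (rs' : Multiset Y) (es : Multiset Y),
    IsRootTuple r rs ∧ IsRootTuple r' rs' ∧ tupleLE r' (rs.map φ + es) rs'

/-- The (pre-)broad relation generated by a set of generating relations:
closure under reflexivity and broad transitivity. -/
inductive GenRel (gen : Rel X) : Rel X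
  | of : ∀ fs e, gen fs e → GenRel gen fs e
  | refl : ∀ e, GenRel gen {e} e
  | btrans : ∀ (p : Multiset (Multiset X × X)) (e : X),
      GenRel gen (p.map Prod.snd) e → (∀ q ∈ p, GenRel gen q.1 q.2) →
      GenRel gen ((p.map Prod.fst).sum) e

/-- Generators of the tensor product `S ⊗ T`: relations `s̲ × t ≤ (s,t)` and
`s × t̲ ≤ (s,t)`. -/
def tensorGen (rS : Rel A) (rT : Rel B) : Rel (A × B) := fun xs x =>
  (∃ as, rS as x.1 ∧ xs = as.map fun a => (a, x.2)) ∨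
  (∃ bs, rT bs x.2 ∧ xs = bs.map fun b => (x.1, b))

/-- The tensor product broad relation on `A × B`. -/
def tensorRel (rS : Rel A) (rT : Rel B) : Rel (A × B) := GenRel (tensorGen rS rT)

/-- Product of tuples: all pairs from `as` and `bs`. -/
def mprod (as : Multiset A) (bs : Multiset B) : Multiset (A × B) :=
  as.bind fun a => bs.map fun b => (a, b)

end BroadPaper

namespace BroadPaper

/-! ### multiset helpers -/

lemma mem_msum {a : X} {S : Multiset (Multiset X)} : a ∈ S.sum ↔ ∃ s ∈ S, a ∈ s := by
  induction S using Multiset.induction_on with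
  | empty => simp
  | cons c S ih => simp [ih]

lemma map_msum (f : X → Y) (S : Multiset (Multiset X)) :
    S.sum.map f = (S.map (Multiset.map f)).sum := by
  induction S using Multiset.induction_on with
  | empty => simp
  | cons c S ih => simp [ih]

lemma sum_msum (S : Multiset (Multiset (Multiset X))) :
    S.sum.sum = (S.map Multiset.sum).sum := by
  induction S using Multiset.induction_on with
  | empty => simp
  | cons c S ih => simp [ih]

lemma msum_add (s : Multiset Y) (f g : Y → Multiset X) :
    (s.map fun y => f y + g y).sum = (s.map f).sum + (s.map g).sum := by
  induction s using Multiset.induction_on with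
  | empty => simp
  | cons c s ih =>
      simp only [Multiset.map_cons, Multiset.sum_cons, ih]
      abel

lemma msum_comm (s : Multiset Y) (t : Multiset Z) (F : Y → Z → Multiset X) :
    (s.map fun a => (t.map fun b => F a b).sum).sum
      = (t.map fun b => (s.map fun a => F a b).sum).sum := by
  induction s using Multiset.induction_on with
  | empty => simp
  | cons c s ih => simp [ih, msum_add]

/-! ### basic broad poset lemmas -/

attribute [local instance] Classical.propDecidable

section Basic

variable {r : Rel X}

lemma expand (hb : BTrans r) (hrefl : ∀ e : X, r {e} e) {fs : Multiset X} {e g : X}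
    (hfs : r fs e) (hg : g ∈ fs) {gs : Multiset X} (hgs : r gs g) :
    r (gs + fs.erase g) e := by
  set p : Multiset (Multiset X × X) :=
    (gs, g) ::ₘ (fs.erase g).map (fun y => (({y} : Multiset X), y)) with hp
  have h1 : p.map Prod.snd = fs := by
    simp [hp, Multiset.map_map, Function.comp_def, Multiset.cons_erase hg]
  have h2 : (p.map Prod.fst).sum = gs + fs.erase g := by
    simp [hp, Multiset.map_map, Function.comp_def]
  have h := hb p e (by rwa [h1]) ?_
  · rwa [h2] at h
  · intro q hq
    rcases Multiset.mem_cons.1 hq with h | h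
    · subst h; exact hgs
    · rcases Multiset.mem_map.1 h with ⟨y, _, rfl⟩; exact hrefl y

lemma eq_singleton_of_mem (hb : BTrans r) (hrefl : ∀ e : X, r {e} e) (hs : Simple r)
    {fs : Multiset X} {e : X} (hfs : r fs e) (he : e ∈ fs) : fs = {e} := by
  have h := expand hb hrefl hfs he hfs
  have hn := hs _ _ h
  have hc : fs.erase e = 0 := by
    by_contra h0
    rcases Multiset.exists_mem_of_ne_zero h0 with ⟨a, ha⟩
    have h1 : a ∈ fs := Multiset.mem_of_mem_erase ha
    have c1 := Multiset.count_pos.2 h1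
    have c2 := Multiset.count_pos.2 ha
    have := (Multiset.nodup_iff_count_le_one.1 hn) a
    rw [Multiset.count_add] at this
    omega
  have h2 := Multiset.cons_erase he
  rw [hc] at h2
  simpa using h2.symm

lemma descends_refl (hrefl : ∀ e : X, r {e} e) (e : X) : descends r e e :=
  ⟨{e}, hrefl e, by simp⟩

lemma descends_trans (hb : BTrans r) (hrefl : ∀ e : X, r {e} e) {f g e : X}
    (h1 : descends r f g) (h2 : descends r g e) : descends r f e := by
  rcases h1 with ⟨fs, hfs, hf⟩
  rcases h2 with ⟨gs, hgs, hg⟩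
  exact ⟨fs + gs.erase g, expand hb hrefl hgs hg hfs, by simp [hf]⟩

lemma sibling_disjoint (hb : BTrans r) (hrefl : ∀ e : X, r {e} e) (hs : Simple r)
    {rest : Multiset X} {x f g e : X}
    (hfs : r (f ::ₘ g ::ₘ rest) x) (hef : descends r e f) (heg : descends r e g) : False := by
  rcases hef with ⟨as, has, hea⟩
  rcases heg with ⟨bs, hbs, heb⟩
  have h1 : r (as + (g ::ₘ rest)) x := by
    have h := expand hb hrefl hfs (Multiset.mem_cons_self f _) has
    simpa using h
  have h1' : r (g ::ₘ (as + rest)) x := by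
    rwa [Multiset.add_cons] at h1
  have h2 : r (bs + (as + rest)) x := by
    have h := expand hb hrefl h1' (Multiset.mem_cons_self g _) hbs
    simpa using h
  have hn := hs _ _ h2
  have : (1 : ℕ) < Multiset.count e (bs + (as + rest)) := by
    have c1 := Multiset.count_pos.2 heb
    have c2 := Multiset.count_pos.2 hea
    simp only [Multiset.count_add]
    omega
  have := (Multiset.nodup_iff_count_le_one.1 hn) e
  omega

lemma descends_antisymm (hbr : IsBroad r) (hs : Simple r) {e f : X}
    (h1 : descends r f e) (h2 : descends r e f) : e = f := by
  rcases h1 with ⟨fs, hfs, hf⟩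
  rcases h2 with ⟨es, hes, he⟩
  have hb := hbr.1.2
  have hrefl := hbr.1.1
  have h3 : r (es + fs.erase f) e := expand hb hrefl hfs hf hes
  have h4 : es + fs.erase f = {e} :=
    eq_singleton_of_mem hb hrefl hs h3 (by simp [he])
  have hcard : Multiset.card es + Multiset.card (fs.erase f) = 1 := by
    have := congrArg Multiset.card h4
    simpa using this
  have hes0 : 0 < Multiset.card es := Multiset.card_pos_iff_exists_mem.2 ⟨e, he⟩
  have hfe : Multiset.card (fs.erase f) = 0 := by omega
  have hfs1 : fs = {f} := by
    have h5 := Multiset.cons_erase hf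
    rw [Multiset.card_eq_zero.1 hfe] at h5
    simpa using h5.symm
  have hes1 : es = {e} := by
    rw [Multiset.card_eq_zero.1 hfe, add_zero] at h4
    exact h4
  exact hbr.2 e f (hes1 ▸ hes) (hfs1 ▸ hfs)


lemma not_mem_upTuple (hb : BTrans r) (hrefl : ∀ e : X, r {e} e) (hs : Simple r)
    {e : X} {fs : Multiset X} (hup : upTuple r e fs) : e ∉ fs := fun he =>
  hup.1.2 (eq_singleton_of_mem hb hrefl hs hup.1.1 he)

lemma descends_up (hb : BTrans r) (hrefl : ∀ e : X, r {e} e)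
    {e f : X} {gs : Multiset X} (hup : upTuple r e gs)
    (hfe : descends r f e) (hne : f ≠ e) : ∃ g ∈ gs, descends r f g := by
  rcases hfe with ⟨fs, hfs, hf⟩
  have hfs_ne : fs ≠ {e} := by rintro rfl; simp at hf; exact hne hf
  rcases hup.2 fs hfs hfs_ne with ⟨p, hsnd, hsum, hrel⟩
  have hmem : f ∈ (p.map Prod.fst).sum := hsum ▸ hf
  rcases mem_msum.1 hmem with ⟨s, hs, hfv⟩
  rcases Multiset.mem_map.1 hs with ⟨q, hq, rfl⟩
  exact ⟨q.2, hsnd ▸ Multiset.mem_map_of_mem _ hq, ⟨q.1, hrel q hq, hfv⟩⟩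

lemma mem_up_descends {e g : X} {gs : Multiset X} (hup : upTuple r e gs)
    (hg : g ∈ gs) : descends r g e := ⟨gs, hup.1.1, hg⟩

lemma sdes_wf (ht : IsTree r) : WellFounded (fun a b : X => descends r a b ∧ a ≠ b) := by
  have : Finite X := ht.2.1
  have htr : IsTrans X (fun a b : X => descends r a b ∧ a ≠ b) := by
    constructor
    rintro a b c ⟨hab, hne⟩ ⟨hbc, hne'⟩
    refine ⟨descends_trans ht.1.1.2 ht.1.1.1 hab hbc, ?_⟩
    rintro rfl
    exact hne (descends_antisymm ht.1 ht.2.2.1 hab hbc).symm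
  have hir : IsIrrefl X (fun a b : X => descends r a b ∧ a ≠ b) := ⟨fun a h => h.2 rfl⟩
  exact Finite.wellFounded_of_trans_of_irrefl _

lemma upTuple_of_ne (ht : IsTree r) {e f : X} (hfe : descends r f e) (hne : f ≠ e) :
    ∃ gs, upTuple r e gs := by
  rcases ht.2.2.2.1 e with hleaf | h
  · exfalso
    rcases hfe with ⟨fs, hfs, hf⟩
    exact hleaf ⟨fs, hfs, by rintro rfl; simp at hf; exact hne hf⟩
  · exact h

lemma branching (ht : IsTree r) {u v : X} (huv : ¬ descends r u v) (hvu : ¬ descends r v u) :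
    ∃ (rest : Multiset X) (x f g : X),
      r (f ::ₘ g ::ₘ rest) x ∧ descends r u f ∧ descends r v g := by
  obtain ⟨rt, hrt⟩ := ht.2.2.2.2
  have hb := ht.1.1.2
  have hrefl := ht.1.1.1
  have hs := ht.2.2.1
  have main : ∀ x : X, descends r u x → descends r v x →
      ∃ (rest : Multiset X) (x' f g : X),
        r (f ::ₘ g ::ₘ rest) x' ∧ descends r u f ∧ descends r v g := by
    intro x
    induction x using (sdes_wf ht).induction with
    | _ x ih =>
      intro hux hvx
      have hune : u ≠ x := by rintro rfl; exact hvu hvx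
      have hvne : v ≠ x := by rintro rfl; exact huv hux
      obtain ⟨hs', hup⟩ := upTuple_of_ne ht hux hune
      obtain ⟨f, hf, huf⟩ := descends_up hb hrefl hup hux hune
      obtain ⟨g, hg, hvg⟩ := descends_up hb hrefl hup hvx hvne
      by_cases hfg : f = g
      · subst hfg
        exact ih f ⟨mem_up_descends hup hf, fun h => not_mem_upTuple hb hrefl hs hup (h ▸ hf)⟩
          huf hvg
      · have h1 : g ∈ hs'.erase f := (Multiset.mem_erase_of_ne (Ne.symm hfg)).2 hg
        have h2 : hs' = f ::ₘ g ::ₘ (hs'.erase f).erase g := by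
          rw [Multiset.cons_erase h1, Multiset.cons_erase hf]
        exact ⟨(hs'.erase f).erase g, x, f, g, h2 ▸ hup.1.1, huf, hvg⟩
  exact (fun ⟨rest, x, f, g, h⟩ => ⟨rest, x, f, g, h⟩) (main rt (hrt u) (hrt v))

lemma comparable_of_common_below (ht : IsTree r) {e f g : X}
    (hef : descends r e f) (heg : descends r e g) :
    descends r f g ∨ descends r g f := by
  by_contra h
  push_neg at h
  obtain ⟨rest, x, f', g', hrel, hf, hg⟩ := branching ht h.1 h.2
  exact sibling_disjoint ht.1.1.2 ht.1.1.1 ht.2.2.1 hrel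
    (descends_trans ht.1.1.2 ht.1.1.1 hef hf)
    (descends_trans ht.1.1.2 ht.1.1.1 heg hg)

lemma tupleLE_descends {fs gs : Multiset X} (h : tupleLE r fs gs) {f : X} (hf : f ∈ fs) :
    ∃ g ∈ gs, descends r f g := by
  rcases h with ⟨p, hsnd, hsum, hrel⟩
  rcases mem_msum.1 (hsum ▸ hf) with ⟨s, hsmem, hfs⟩
  rcases Multiset.mem_map.1 hsmem with ⟨q, hq, rfl⟩
  exact ⟨q.2, hsnd ▸ Multiset.mem_map_of_mem _ hq, ⟨q.1, hrel q hq, hfs⟩⟩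

lemma upTuple_unique (ht : IsTree r) {e : X} {fs gs : Multiset X}
    (hf : upTuple r e fs) (hg : upTuple r e gs) : fs = gs := by
  have hb := ht.1.1.2
  have hrefl := ht.1.1.1
  have hs := ht.2.2.1
  have key : ∀ (fs gs : Multiset X), upTuple r e fs → upTuple r e gs →
      ∀ f ∈ fs, f ∈ gs := by
    intro fs gs hf hg f hfmem
    obtain ⟨g, hgmem, hfg⟩ := tupleLE_descends (hg.2 fs hf.1.1 hf.1.2) hfmem
    obtain ⟨f', hfmem', hgf'⟩ := tupleLE_descends (hf.2 gs hg.1.1 hg.1.2) hgmem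
    have hff' : f = f' := by
      by_contra hne
      have h1 : f' ∈ fs.erase f := (Multiset.mem_erase_of_ne (Ne.symm hne)).2 hfmem'
      have h2 : fs = f ::ₘ f' ::ₘ (fs.erase f).erase f' := by
        rw [Multiset.cons_erase h1, Multiset.cons_erase hfmem]
      exact sibling_disjoint hb hrefl hs (h2 ▸ hf.1.1) (descends_refl hrefl f)
        (descends_trans hb hrefl hfg hgf')
    subst hff'
    have : f = g := descends_antisymm ht.1 hs hgf' hfg
    exact this ▸ hgmem
  exact (Multiset.Nodup.ext (hs _ _ hf.1.1) (hs _ _ hg.1.1)).2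
    (fun a => ⟨key fs gs hf hg a, key gs fs hg hf a⟩)

end Basic


/-! ### step/reach machinery for the tensor product -/

section Tensor

variable {rS : Rel A} {rT : Rel B}

def TStep (rS : Rel A) (rT : Rel B) : Multiset (A × B) → Multiset (A × B) → Prop := fun xs ys =>
  ∃ (a : A) (b : B) (c : Multiset (A × B)), xs = (a, b) ::ₘ c ∧
    ((∃ as, upTuple rS a as ∧ ys = as.map (fun a' => (a', b)) + c) ∨
     (∃ bs, upTuple rT b bs ∧ ys = bs.map (fun b' => (a, b')) + c))

inductive ReachN (rS : Rel A) (rT : Rel B) : ℕ → Multiset (A × B) → Multiset (A × B) → Prop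
  | refl (xs) : ReachN rS rT 0 xs xs
  | head {n xs ys zs} : TStep rS rT xs ys → ReachN rS rT n ys zs → ReachN rS rT (n+1) xs zs

def Reach (rS : Rel A) (rT : Rel B) (xs ys : Multiset (A × B)) : Prop :=
  ∃ n, ReachN rS rT n xs ys

lemma reach_refl (xs : Multiset (A × B)) : Reach rS rT xs xs := ⟨0, ReachN.refl xs⟩

lemma reachN_trans {n m : ℕ} {xs ys zs : Multiset (A × B)}
    (h1 : ReachN rS rT n xs ys) (h2 : ReachN rS rT m ys zs) :
    ReachN rS rT (n + m) xs zs := by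
  induction h1 with
  | refl => simpa using h2
  | head hstep hr ih =>
      have := ReachN.head hstep (ih h2)
      convert this using 1
      omega

lemma reach_trans {xs ys zs : Multiset (A × B)}
    (h1 : Reach rS rT xs ys) (h2 : Reach rS rT ys zs) : Reach rS rT xs zs := by
  rcases h1 with ⟨n, h1⟩; rcases h2 with ⟨m, h2⟩; exact ⟨n + m, reachN_trans h1 h2⟩

lemma tstep_add {xs ys c : Multiset (A × B)} (h : TStep rS rT xs ys) :
    TStep rS rT (xs + c) (ys + c) := by
  rcases h with ⟨a, b, c', rfl, h⟩
  refine ⟨a, b, c' + c, by rw [Multiset.cons_add], ?_⟩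
  rcases h with ⟨as, hup, rfl⟩ | ⟨bs, hup, rfl⟩
  · exact Or.inl ⟨as, hup, by rw [add_assoc]⟩
  · exact Or.inr ⟨bs, hup, by rw [add_assoc]⟩

lemma reachN_add {n : ℕ} {xs ys : Multiset (A × B)} (c : Multiset (A × B))
    (h : ReachN rS rT n xs ys) : ReachN rS rT n (xs + c) (ys + c) := by
  induction h with
  | refl => exact ReachN.refl _
  | head hstep hr ih => exact ReachN.head (tstep_add hstep) ih

lemma reachN_add_left {n : ℕ} {xs ys : Multiset (A × B)} (c : Multiset (A × B))
    (h : ReachN rS rT n xs ys) : ReachN rS rT n (c + xs) (c + ys) := by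
  rw [add_comm c xs, add_comm c ys]; exact reachN_add c h

lemma reach_add {xs ys : Multiset (A × B)} (c : Multiset (A × B))
    (h : Reach rS rT xs ys) : Reach rS rT (xs + c) (ys + c) := by
  rcases h with ⟨n, h⟩; exact ⟨n, reachN_add c h⟩

/-- fold a family of reaches from singletons, with lengths. -/
lemma reachN_fold (f : A × B → Multiset (A × B)) (g : A × B → ℕ) :
    ∀ (ds : Multiset (A × B)), (∀ d ∈ ds, ReachN rS rT (g d) {d} (f d)) →
      ReachN rS rT ((ds.map g).sum) ds ((ds.map f).sum) := by
  intro ds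
  induction ds using Multiset.induction_on with
  | empty => intro _; simpa using ReachN.refl (0 : Multiset (A × B))
  | cons d ds ih =>
      intro h
      simp only [Multiset.map_cons, Multiset.sum_cons]
      have h1 : ReachN rS rT (g d) (d ::ₘ ds) (f d + ds) := by
        have := reachN_add ds (h d (Multiset.mem_cons_self d ds))
        simpa [Multiset.singleton_add] using this
      have h2 : ReachN rS rT ((ds.map g).sum) (f d + ds) (f d + (ds.map f).sum) :=
        reachN_add_left _ (ih (fun d' hd' => h d' (Multiset.mem_cons_of_mem hd')))
      exact reachN_trans h1 h2

/-- fold in pair form. -/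
lemma reach_pairs (p : Multiset (Multiset (A × B) × (A × B)))
    (h : ∀ q ∈ p, Reach rS rT {q.2} q.1) :
    Reach rS rT (p.map Prod.snd) ((p.map Prod.fst).sum) := by
  induction p using Multiset.induction_on with
  | empty => simpa using reach_refl 0
  | cons q p ih =>
      simp only [Multiset.map_cons, Multiset.sum_cons]
      have h1 : Reach rS rT (q.2 ::ₘ p.map Prod.snd) (q.1 + p.map Prod.snd) := by
        have := reach_add (p.map Prod.snd) (h q (Multiset.mem_cons_self q p))
        simpa [Multiset.singleton_add] using this
      have h2 := reach_add (c := q.1) (ih (fun q' hq' => h q' (Multiset.mem_cons_of_mem hq')))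
      rw [add_comm _ q.1, add_comm _ q.1] at h2
      exact reach_trans h1 h2

/-! ### relating `tensorRel` and `Reach` -/

lemma tensorRel_step {xs ys : Multiset (A × B)} {x : A × B}
    (hx : tensorRel rS rT xs x) (h : TStep rS rT xs ys) : tensorRel rS rT ys x := by
  rcases h with ⟨a, b, c, rfl, h⟩
  rcases h with ⟨as, hup, rfl⟩ | ⟨bs, hup, rfl⟩
  · set p : Multiset (Multiset (A × B) × (A × B)) :=
      (as.map (fun a' => (a', b)), (a, b)) ::ₘ c.map (fun y => ({y}, y)) with hp
    have h1 : p.map Prod.snd = (a, b) ::ₘ c := by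
      simp [hp, Multiset.map_map, Function.comp_def]
    have h2 : (p.map Prod.fst).sum = as.map (fun a' => (a', b)) + c := by
      simp [hp, Multiset.map_map, Function.comp_def]
    have hq : ∀ q ∈ p, GenRel (tensorGen rS rT) q.1 q.2 := by
      intro q hq
      rcases Multiset.mem_cons.1 hq with h | h
      · subst h
        exact GenRel.of _ _ (Or.inl ⟨as, hup.1.1, rfl⟩)
      · rcases Multiset.mem_map.1 h with ⟨y, _, rfl⟩
        exact GenRel.refl y
    have := GenRel.btrans p x (by rwa [h1]) hq
    rwa [h2] at this
  · set p : Multiset (Multiset (A × B) × (A × B)) :=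
      (bs.map (fun b' => (a, b')), (a, b)) ::ₘ c.map (fun y => ({y}, y)) with hp
    have h1 : p.map Prod.snd = (a, b) ::ₘ c := by
      simp [hp, Multiset.map_map, Function.comp_def]
    have h2 : (p.map Prod.fst).sum = bs.map (fun b' => (a, b')) + c := by
      simp [hp, Multiset.map_map, Function.comp_def]
    have hq : ∀ q ∈ p, GenRel (tensorGen rS rT) q.1 q.2 := by
      intro q hq
      rcases Multiset.mem_cons.1 hq with h | h
      · subst h
        exact GenRel.of _ _ (Or.inr ⟨bs, hup.1.1, rfl⟩)
      · rcases Multiset.mem_map.1 h with ⟨y, _, rfl⟩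
        exact GenRel.refl y
    have := GenRel.btrans p x (by rwa [h1]) hq
    rwa [h2] at this

lemma tensorRel_of_reachN {n : ℕ} {xs ys : Multiset (A × B)} {x : A × B}
    (h : ReachN rS rT n xs ys) (hx : tensorRel rS rT xs x) : tensorRel rS rT ys x := by
  induction h with
  | refl => exact hx
  | head hstep hr ih => exact ih (tensorRel_step hx hstep)

lemma tensorRel_of_reach {ys : Multiset (A × B)} {x : A × B}
    (h : Reach rS rT {x} ys) : tensorRel rS rT ys x := by
  rcases h with ⟨n, h⟩
  exact tensorRel_of_reachN h (GenRel.refl x)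

lemma gen_reachS (hS : IsTree rS) :
    ∀ (s : A) {as : Multiset A} (t : B), rS as s →
      Reach rS rT {(s, t)} (as.map (fun a => (a, t))) := by
  have hwf := sdes_wf hS
  intro s
  induction s using hwf.induction with
  | _ s ih =>
      intro as t has
      by_cases hs1 : as = {s}
      · subst hs1; simpa using reach_refl {(s, t)}
      · obtain ⟨ss, hup⟩ : ∃ ss, upTuple rS s ss := by
          rcases hS.2.2.2.1 s with hleaf | h
          · exact absurd ⟨as, has, hs1⟩ hleaf
          · exact h
        obtain ⟨p, hsnd, hsum, hrel⟩ := hup.2 as has hs1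
        have step1 : Reach rS rT {(s, t)} (ss.map (fun a => (a, t))) := by
          refine ⟨1, ReachN.head ⟨s, t, 0, by simp, Or.inl ⟨ss, hup, by simp⟩⟩ (ReachN.refl _)⟩
        have step2 : Reach rS rT (ss.map (fun a => (a, t))) (as.map (fun a => (a, t))) := by
          set p' : Multiset (Multiset (A × B) × (A × B)) :=
            p.map (fun q => (q.1.map (fun a => (a, t)), (q.2, t))) with hp'
          have h1 : p'.map Prod.snd = ss.map (fun a => (a, t)) := by
            simp only [hp', Multiset.map_map, Function.comp_def]
            rw [← hsnd, Multiset.map_map]; rfl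
          have h2 : (p'.map Prod.fst).sum = as.map (fun a => (a, t)) := by
            simp only [hp', Multiset.map_map, Function.comp_def]
            rw [← hsum, map_msum, Multiset.map_map]; rfl
          have h3 := reach_pairs (rS := rS) (rT := rT) p' ?_
          · rwa [h1, h2] at h3
          · intro q' hq'
            rcases Multiset.mem_map.1 hq' with ⟨q, hq, rfl⟩
            have hq2 : q.2 ∈ ss := hsnd ▸ Multiset.mem_map_of_mem _ hq
            exact ih q.2 ⟨mem_up_descends hup hq2,
              fun h => not_mem_upTuple hS.1.1.2 hS.1.1.1 hS.2.2.1 hup (h ▸ hq2)⟩ t (hrel q hq)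
        exact reach_trans step1 step2

lemma gen_reachT (hT : IsTree rT) :
    ∀ (t : B) {bs : Multiset B} (s : A), rT bs t →
      Reach rS rT {(s, t)} (bs.map (fun b => (s, b))) := by
  have hwf := sdes_wf hT
  intro t
  induction t using hwf.induction with
  | _ t ih =>
      intro bs s hbs
      by_cases hs1 : bs = {t}
      · subst hs1; simpa using reach_refl {(s, t)}
      · obtain ⟨ts, hup⟩ : ∃ ts, upTuple rT t ts := by
          rcases hT.2.2.2.1 t with hleaf | h
          · exact absurd ⟨bs, hbs, hs1⟩ hleaf
          · exact h
        obtain ⟨p, hsnd, hsum, hrel⟩ := hup.2 bs hbs hs1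
        have step1 : Reach rS rT {(s, t)} (ts.map (fun b => (s, b))) := by
          refine ⟨1, ReachN.head ⟨s, t, 0, by simp, Or.inr ⟨ts, hup, by simp⟩⟩ (ReachN.refl _)⟩
        have step2 : Reach rS rT (ts.map (fun b => (s, b))) (bs.map (fun b => (s, b))) := by
          set p' : Multiset (Multiset (A × B) × (A × B)) :=
            p.map (fun q => (q.1.map (fun b => (s, b)), (s, q.2))) with hp'
          have h1 : p'.map Prod.snd = ts.map (fun b => (s, b)) := by
            simp only [hp', Multiset.map_map, Function.comp_def]
            rw [← hsnd, Multiset.map_map]; rfl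
          have h2 : (p'.map Prod.fst).sum = bs.map (fun b => (s, b)) := by
            simp only [hp', Multiset.map_map, Function.comp_def]
            rw [← hsum, map_msum, Multiset.map_map]; rfl
          have h3 := reach_pairs (rS := rS) (rT := rT) p' ?_
          · rwa [h1, h2] at h3
          · intro q' hq'
            rcases Multiset.mem_map.1 hq' with ⟨q, hq, rfl⟩
            have hq2 : q.2 ∈ ts := hsnd ▸ Multiset.mem_map_of_mem _ hq
            exact ih q.2 ⟨mem_up_descends hup hq2,
              fun h => not_mem_upTuple hT.1.1.2 hT.1.1.1 hT.2.2.1 hup (h ▸ hq2)⟩ s (hrel q hq)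
        exact reach_trans step1 step2

lemma reach_of_tensorRel (hS : IsTree rS) (hT : IsTree rT) {xs : Multiset (A × B)} {x : A × B}
    (h : tensorRel rS rT xs x) : Reach rS rT {x} xs := by
  induction h with
  | of fs e hgen =>
      rcases hgen with ⟨as, has, rfl⟩ | ⟨bs, hbs, rfl⟩
      · exact gen_reachS hS e.1 e.2 has
      · exact gen_reachT hT e.2 e.1 hbs
  | refl e => exact reach_refl _
  | btrans p e hsnd hq ih ihq =>
      exact reach_trans ih (reach_pairs p ihq)


/-! ### invariants -/

def grle (rS : Rel A) (rT : Rel B) (x y : A × B) : Prop :=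
  descends rS x.1 y.1 ∧ descends rT x.2 y.2

lemma grle_refl (hS : IsTree rS) (hT : IsTree rT) (x : A × B) : grle rS rT x x :=
  ⟨descends_refl hS.1.1.1 _, descends_refl hT.1.1.1 _⟩

lemma grle_trans (hS : IsTree rS) (hT : IsTree rT) {x y z : A × B}
    (h1 : grle rS rT x y) (h2 : grle rS rT y z) : grle rS rT x z :=
  ⟨descends_trans hS.1.1.2 hS.1.1.1 h1.1 h2.1, descends_trans hT.1.1.2 hT.1.1.1 h1.2 h2.2⟩

lemma grle_antisymm (hS : IsTree rS) (hT : IsTree rT) {x y : A × B}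
    (h1 : grle rS rT x y) (h2 : grle rS rT y x) : x = y :=
  Prod.ext (descends_antisymm hS.1 hS.2.2.1 h2.1 h1.1)
    (descends_antisymm hT.1 hT.2.2.1 h2.2 h1.2)

lemma step_grle (hS : IsTree rS) (hT : IsTree rT) {xs ys : Multiset (A × B)}
    (h : TStep rS rT xs ys) : ∀ w ∈ ys, ∃ z ∈ xs, grle rS rT w z := by
  rcases h with ⟨a, b, c, rfl, h⟩
  rcases h with ⟨as, hup, rfl⟩ | ⟨bs, hup, rfl⟩
  · intro w hw
    rcases Multiset.mem_add.1 hw with h | h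
    · rcases Multiset.mem_map.1 h with ⟨a', ha', rfl⟩
      exact ⟨(a, b), Multiset.mem_cons_self _ _,
        mem_up_descends hup ha', descends_refl hT.1.1.1 b⟩
    · exact ⟨w, Multiset.mem_cons_of_mem h, grle_refl hS hT w⟩
  · intro w hw
    rcases Multiset.mem_add.1 hw with h | h
    · rcases Multiset.mem_map.1 h with ⟨b', hb', rfl⟩
      exact ⟨(a, b), Multiset.mem_cons_self _ _,
        descends_refl hS.1.1.1 a, mem_up_descends hup hb'⟩
    · exact ⟨w, Multiset.mem_cons_of_mem h, grle_refl hS hT w⟩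

lemma reachN_grle (hS : IsTree rS) (hT : IsTree rT) {n : ℕ} {xs ys : Multiset (A × B)}
    (h : ReachN rS rT n xs ys) : ∀ w ∈ ys, ∃ z ∈ xs, grle rS rT w z := by
  induction h with
  | refl => exact fun w hw => ⟨w, hw, grle_refl hS hT w⟩
  | head hstep hr ih =>
      intro w hw
      obtain ⟨z, hz, hwz⟩ := ih w hw
      obtain ⟨z', hz', hzz'⟩ := step_grle hS hT hstep z hz
      exact ⟨z', hz', grle_trans hS hT hwz hzz'⟩

lemma reach_grle (hS : IsTree rS) (hT : IsTree rT) {xs ys : Multiset (A × B)}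
    (h : Reach rS rT xs ys) : ∀ w ∈ ys, ∃ z ∈ xs, grle rS rT w z := by
  rcases h with ⟨n, h⟩; exact reachN_grle hS hT h

lemma tstep_singleton {x : A × B} {ys : Multiset (A × B)} (h : TStep rS rT {x} ys) :
    (∃ as, upTuple rS x.1 as ∧ ys = as.map (fun a' => (a', x.2))) ∨
    (∃ bs, upTuple rT x.2 bs ∧ ys = bs.map (fun b' => (x.1, b'))) := by
  rcases h with ⟨a, b, c, hx, h⟩
  have hc : c = 0 ∧ (a, b) = x := by
    have hcard := congrArg Multiset.card hx
    simp only [Multiset.card_singleton, Multiset.card_cons] at hcard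
    have hc0 : c = 0 := by
      have : Multiset.card c = 0 := by omega
      exact Multiset.card_eq_zero.1 this
    subst hc0
    simp only [Multiset.cons_zero] at hx
    exact ⟨rfl, (Multiset.singleton_inj.1 hx).symm⟩
  obtain ⟨rfl, rfl⟩ := hc
  rcases h with ⟨as, hup, rfl⟩ | ⟨bs, hup, rfl⟩
  · exact Or.inl ⟨as, hup, by simp⟩
  · exact Or.inr ⟨bs, hup, by simp⟩

lemma step_singleton_strict (hS : IsTree rS) (hT : IsTree rT) {x : A × B}
    {ys : Multiset (A × B)} (h : TStep rS rT {x} ys) :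
    ∀ z ∈ ys, grle rS rT z x ∧ z ≠ x := by
  rcases tstep_singleton h with ⟨as, hup, rfl⟩ | ⟨bs, hup, rfl⟩
  · intro z hz
    rcases Multiset.mem_map.1 hz with ⟨a', ha', rfl⟩
    refine ⟨⟨mem_up_descends hup ha', descends_refl hT.1.1.1 _⟩, ?_⟩
    intro hzx
    have : a' = x.1 := congrArg Prod.fst hzx
    exact not_mem_upTuple hS.1.1.2 hS.1.1.1 hS.2.2.1 hup (this ▸ ha')
  · intro z hz
    rcases Multiset.mem_map.1 hz with ⟨b', hb', rfl⟩
    refine ⟨⟨descends_refl hS.1.1.1 _, mem_up_descends hup hb'⟩, ?_⟩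
    intro hzx
    have : b' = x.2 := congrArg Prod.snd hzx
    exact not_mem_upTuple hT.1.1.2 hT.1.1.1 hT.2.2.1 hup (this ▸ hb')

lemma reachN_strict (hS : IsTree rS) (hT : IsTree rT) {n : ℕ} {x : A × B}
    {ys : Multiset (A × B)} (h : ReachN rS rT n {x} ys) (hne : ys ≠ {x}) :
    ∀ w ∈ ys, grle rS rT w x ∧ w ≠ x := by
  cases h with
  | refl => exact absurd rfl hne
  | head hstep hr =>
      intro w hw
      obtain ⟨z, hz, hwz⟩ := reachN_grle hS hT hr w hw
      obtain ⟨hzx, hzne⟩ := step_singleton_strict hS hT hstep z hz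
      refine ⟨grle_trans hS hT hwz hzx, ?_⟩
      rintro rfl
      exact hzne (grle_antisymm hS hT hzx hwz)

/-! ### pairwise incomparability invariant -/

def IncompPair (rS : Rel A) (rT : Rel B) (y z : A × B) : Prop :=
  Incomp rS y.1 z.1 ∨ Incomp rT y.2 z.2

lemma incompPair_symm {y z : A × B} (h : IncompPair rS rT y z) : IncompPair rS rT z y := by
  rcases h with ⟨h1, h2⟩ | ⟨h1, h2⟩
  · exact Or.inl ⟨h2, h1⟩
  · exact Or.inr ⟨h2, h1⟩

def PInv (rS : Rel A) (rT : Rel B) (xs : Multiset (A × B)) : Prop :=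
  xs.Nodup ∧ ∀ y ∈ xs, ∀ z ∈ xs, y ≠ z → IncompPair rS rT y z

lemma rel_pairwise_incomp {r : Rel X} (hb : BTrans r) (hrefl : ∀ e : X, r {e} e)
    (hs : Simple r) {fs : Multiset X} {e : X} (h : r fs e) :
    ∀ f ∈ fs, ∀ g ∈ fs, f ≠ g → Incomp r f g := by
  intro f hf g hg hne
  have h1 : g ∈ fs.erase f := (Multiset.mem_erase_of_ne (Ne.symm hne)).2 hg
  have h2 : fs = f ::ₘ g ::ₘ (fs.erase f).erase g := by
    rw [Multiset.cons_erase h1, Multiset.cons_erase hf]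
  constructor
  · intro hfg
    exact sibling_disjoint hb hrefl hs (h2 ▸ h) (descends_refl hrefl f) hfg
  · intro hgf
    exact sibling_disjoint hb hrefl hs (h2 ▸ h) hgf (descends_refl hrefl g)

lemma pinv_step (hS : IsTree rS) (hT : IsTree rT) {xs ys : Multiset (A × B)}
    (h : TStep rS rT xs ys) (hinv : PInv rS rT xs) : PInv rS rT ys := by
  classical
  rcases h with ⟨a, b, c, rfl, h⟩
  have hnd := hinv.1
  have hab_c : (a, b) ∉ c := (Multiset.nodup_cons.1 hnd).1
  have hc : c.Nodup := (Multiset.nodup_cons.1 hnd).2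
  rcases h with ⟨as, hup, rfl⟩ | ⟨bs, hup, rfl⟩
  · have hasnd : as.Nodup := hS.2.2.1 _ _ hup.1.1
    have hrepl_nd : (as.map (fun a' => (a', b))).Nodup :=
      hasnd.map (fun a1 a2 h => congrArg Prod.fst h)
    have hdisj : ∀ w ∈ as.map (fun a' => (a', b)), w ∉ c := by
      rintro w hw hwc
      rcases Multiset.mem_map.1 hw with ⟨a', ha', rfl⟩
      have hne : (a', b) ≠ (a, b) := by
        intro hh
        have h' : a' = a := congrArg Prod.fst hh
        subst h'
        exact not_mem_upTuple hS.1.1.2 hS.1.1.1 hS.2.2.1 hup ha'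
      have := hinv.2 (a', b) (Multiset.mem_cons_of_mem hwc) (a, b)
        (Multiset.mem_cons_self _ _) hne
      rcases this with ⟨h1, _⟩ | ⟨h1, _⟩
      · exact h1 (mem_up_descends hup ha')
      · exact h1 (descends_refl hT.1.1.1 b)
    refine ⟨?_, ?_⟩
    · rw [Multiset.nodup_add]
      exact ⟨hrepl_nd, hc, Multiset.disjoint_left.2 (fun {w} hw => hdisj w hw)⟩
    · intro y hy z hz hne
      rcases Multiset.mem_add.1 hy with hy1 | hy1 <;> rcases Multiset.mem_add.1 hz with hz1 | hz1
      · -- both new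
        rcases Multiset.mem_map.1 hy1 with ⟨a1, ha1, rfl⟩
        rcases Multiset.mem_map.1 hz1 with ⟨a2, ha2, rfl⟩
        have hne12 : a1 ≠ a2 := fun h => hne (by rw [h])
        exact Or.inl (rel_pairwise_incomp hS.1.1.2 hS.1.1.1 hS.2.2.1 hup.1.1 a1 ha1 a2 ha2 hne12)
      · -- y new, z old
        rcases Multiset.mem_map.1 hy1 with ⟨a1, ha1, rfl⟩
        have habz : (a, b) ≠ z := fun h => hab_c (h ▸ hz1)
        have hold := hinv.2 (a, b) (Multiset.mem_cons_self _ _) z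
          (Multiset.mem_cons_of_mem hz1) habz
        rcases hold with ⟨h1, h2⟩ | hT2
        · refine Or.inl ⟨?_, ?_⟩
          · intro hd
            have hcomp := comparable_of_common_below hS hd (mem_up_descends hup ha1)
            rcases hcomp with hcc | hcc
            · exact h2 hcc
            · exact h1 hcc
          · intro hd
            exact h2 (descends_trans hS.1.1.2 hS.1.1.1 hd (mem_up_descends hup ha1))
        · exact Or.inr hT2
      · -- y old, z new
        rcases Multiset.mem_map.1 hz1 with ⟨a1, ha1, rfl⟩
        have habz : (a, b) ≠ y := fun h => hab_c (h ▸ hy1)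
        have hold := hinv.2 (a, b) (Multiset.mem_cons_self _ _) y
          (Multiset.mem_cons_of_mem hy1) habz
        rcases hold with ⟨h1, h2⟩ | hT2
        · refine Or.inl ⟨?_, ?_⟩
          · intro hd
            exact h2 (descends_trans hS.1.1.2 hS.1.1.1 hd (mem_up_descends hup ha1))
          · intro hd
            have hcomp := comparable_of_common_below hS hd (mem_up_descends hup ha1)
            rcases hcomp with hcc | hcc
            · exact h2 hcc
            · exact h1 hcc
        · exact Or.inr ⟨hT2.2, hT2.1⟩
      · exact hinv.2 y (Multiset.mem_cons_of_mem hy1) z (Multiset.mem_cons_of_mem hz1) hne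
  · have hbsnd : bs.Nodup := hT.2.2.1 _ _ hup.1.1
    have hrepl_nd : (bs.map (fun b' => (a, b'))).Nodup :=
      hbsnd.map (fun b1 b2 h => congrArg Prod.snd h)
    have hdisj : ∀ w ∈ bs.map (fun b' => (a, b')), w ∉ c := by
      rintro w hw hwc
      rcases Multiset.mem_map.1 hw with ⟨b', hb', rfl⟩
      have hne : (a, b') ≠ (a, b) := by
        intro hh
        have h' : b' = b := congrArg Prod.snd hh
        subst h'
        exact not_mem_upTuple hT.1.1.2 hT.1.1.1 hT.2.2.1 hup hb'
      have := hinv.2 (a, b') (Multiset.mem_cons_of_mem hwc) (a, b)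
        (Multiset.mem_cons_self _ _) hne
      rcases this with ⟨h1, _⟩ | ⟨h1, _⟩
      · exact h1 (descends_refl hS.1.1.1 a)
      · exact h1 (mem_up_descends hup hb')
    refine ⟨?_, ?_⟩
    · rw [Multiset.nodup_add]
      exact ⟨hrepl_nd, hc, Multiset.disjoint_left.2 (fun {w} hw => hdisj w hw)⟩
    · intro y hy z hz hne
      rcases Multiset.mem_add.1 hy with hy1 | hy1 <;> rcases Multiset.mem_add.1 hz with hz1 | hz1
      · rcases Multiset.mem_map.1 hy1 with ⟨b1, hb1, rfl⟩
        rcases Multiset.mem_map.1 hz1 with ⟨b2, hb2, rfl⟩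
        have hne12 : b1 ≠ b2 := fun h => hne (by rw [h])
        exact Or.inr (rel_pairwise_incomp hT.1.1.2 hT.1.1.1 hT.2.2.1 hup.1.1 b1 hb1 b2 hb2 hne12)
      · rcases Multiset.mem_map.1 hy1 with ⟨b1, hb1, rfl⟩
        have habz : (a, b) ≠ z := fun h => hab_c (h ▸ hz1)
        have hold := hinv.2 (a, b) (Multiset.mem_cons_self _ _) z
          (Multiset.mem_cons_of_mem hz1) habz
        rcases hold with hS2 | ⟨h1, h2⟩
        · exact Or.inl hS2
        · refine Or.inr ⟨?_, ?_⟩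
          · intro hd
            have hcomp := comparable_of_common_below hT hd (mem_up_descends hup hb1)
            rcases hcomp with hcc | hcc
            · exact h2 hcc
            · exact h1 hcc
          · intro hd
            exact h2 (descends_trans hT.1.1.2 hT.1.1.1 hd (mem_up_descends hup hb1))
      · rcases Multiset.mem_map.1 hz1 with ⟨b1, hb1, rfl⟩
        have habz : (a, b) ≠ y := fun h => hab_c (h ▸ hy1)
        have hold := hinv.2 (a, b) (Multiset.mem_cons_self _ _) y
          (Multiset.mem_cons_of_mem hy1) habz
        rcases hold with hS2 | ⟨h1, h2⟩
        · exact Or.inl ⟨hS2.2, hS2.1⟩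
        · refine Or.inr ⟨?_, ?_⟩
          · intro hd
            exact h2 (descends_trans hT.1.1.2 hT.1.1.1 hd (mem_up_descends hup hb1))
          · intro hd
            have hcomp := comparable_of_common_below hT hd (mem_up_descends hup hb1)
            rcases hcomp with hcc | hcc
            · exact h2 hcc
            · exact h1 hcc
      · exact hinv.2 y (Multiset.mem_cons_of_mem hy1) z (Multiset.mem_cons_of_mem hz1) hne

lemma pinv_singleton (x : A × B) : PInv rS rT {x} := by
  refine ⟨Multiset.nodup_singleton x, ?_⟩
  intro y hy z hz hne
  simp at hy hz
  exact absurd (hy.trans hz.symm) hne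

lemma pinv_reachN (hS : IsTree rS) (hT : IsTree rT) {n : ℕ} {xs ys : Multiset (A × B)}
    (h : ReachN rS rT n xs ys) (hinv : PInv rS rT xs) : PInv rS rT ys := by
  induction h with
  | refl => exact hinv
  | head hstep hr ih => exact ih (pinv_step hS hT hstep hinv)


/-! ### splitting a reach from a tuple into blocks -/

lemma mem_of_block {zs xs : Multiset (A × B)} {f : A × B → Multiset (A × B)}
    (hfx : (zs.map f).sum = xs) {z v : A × B} (hz : z ∈ zs) (hv : v ∈ f z) : v ∈ xs := by
  rw [← hfx]; exact mem_msum.2 ⟨f z, Multiset.mem_map_of_mem _ hz, hv⟩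

lemma split (hS : IsTree rS) (hT : IsTree rT) :
    ∀ {n : ℕ} {zs xs : Multiset (A × B)}, ReachN rS rT n zs xs → PInv rS rT zs →
    ∃ (f : A × B → Multiset (A × B)) (g : A × B → ℕ),
      (zs.map f).sum = xs ∧ (zs.map g).sum ≤ n ∧
        ∀ z ∈ zs, ReachN rS rT (g z) {z} (f z) := by
  intro n zs xs h
  induction h with
  | refl xs =>
      intro _
      exact ⟨fun z => {z}, fun _ => 0, by simp [Multiset.sum_map_singleton],
        by simp, fun z _ => ReachN.refl _⟩
  | @head n' xs₀ ws zs₀ hstep hr ih =>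
      intro hinv
      have hinv' := pinv_step hS hT hstep hinv
      obtain ⟨f', g', hsum, hlen, hre⟩ := ih hinv'
      obtain ⟨a, b, c, rfl, hd⟩ := hstep
      have hab_c : (a, b) ∉ c := (Multiset.nodup_cons.1 hinv.1).1
      obtain ⟨repl, hws, hstep0⟩ : ∃ repl, ws = repl + c ∧ TStep rS rT {(a, b)} repl := by
        rcases hd with ⟨as, hup, rfl⟩ | ⟨bs, hup, rfl⟩
        · exact ⟨_, rfl, ⟨a, b, 0, by simp, Or.inl ⟨as, hup, by simp⟩⟩⟩
        · exact ⟨_, rfl, ⟨a, b, 0, by simp, Or.inr ⟨bs, hup, by simp⟩⟩⟩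
      subst hws
      classical
      set F : A × B → Multiset (A × B) :=
        fun z => if z = (a, b) then (repl.map f').sum else f' z with hdefF
      set G : A × B → ℕ :=
        fun z => if z = (a, b) then (repl.map g').sum + 1 else g' z with hdefG
      have hFa : F (a, b) = (repl.map f').sum := by rw [hdefF]; simp
      have hGa : G (a, b) = (repl.map g').sum + 1 := by rw [hdefG]; simp
      have hFc : c.map F = c.map f' :=
        Multiset.map_congr rfl
          (fun z hz => if_neg (fun h : z = (a, b) => hab_c (by rwa [h] at hz)))
      have hGc : c.map G = c.map g' :=
        Multiset.map_congr rfl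
          (fun z hz => if_neg (fun h : z = (a, b) => hab_c (by rwa [h] at hz)))
      refine ⟨F, G, ?_, ?_, ?_⟩
      · rw [Multiset.map_cons, Multiset.sum_cons, hFa, hFc, ← Multiset.sum_add,
          ← Multiset.map_add, hsum]
      · rw [Multiset.map_cons, Multiset.sum_cons, hGa, hGc]
        rw [Multiset.map_add, Multiset.sum_add] at hlen
        omega
      · intro z hz
        rcases Multiset.mem_cons.1 hz with rfl | hz'
        · rw [hFa, hGa]
          exact ReachN.head hstep0
            (reachN_fold f' g' repl (fun d hd' => hre d (Multiset.mem_add.2 (Or.inl hd'))))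
        · have hzne : z ≠ (a, b) := fun h => hab_c (by rwa [h] at hz')
          rw [show F z = f' z from if_neg hzne, show G z = g' z from if_neg hzne]
          exact hre z (Multiset.mem_add.2 (Or.inr hz'))

/-! ### swap symmetry -/

lemma tstep_swap {xs ys : Multiset (A × B)} (h : TStep rS rT xs ys) :
    TStep rT rS (xs.map Prod.swap) (ys.map Prod.swap) := by
  obtain ⟨a, b, c, rfl, hd⟩ := h
  refine ⟨b, a, c.map Prod.swap, by simp, ?_⟩
  rcases hd with ⟨as, hup, rfl⟩ | ⟨bs, hup, rfl⟩
  · exact Or.inr ⟨as, hup, by simp [Multiset.map_map, Function.comp_def]⟩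
  · exact Or.inl ⟨bs, hup, by simp [Multiset.map_map, Function.comp_def]⟩

lemma reachN_swap {n : ℕ} {xs ys : Multiset (A × B)} (h : ReachN rS rT n xs ys) :
    ReachN rT rS n (xs.map Prod.swap) (ys.map Prod.swap) := by
  induction h with
  | refl => exact ReachN.refl _
  | head hstep hr ih => exact ReachN.head (tstep_swap hstep) ih

lemma reach_swap {xs ys : Multiset (A × B)} (h : Reach rS rT xs ys) :
    Reach rT rS (xs.map Prod.swap) (ys.map Prod.swap) := by
  rcases h with ⟨n, h⟩; exact ⟨n, reachN_swap h⟩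

/-! ### the percolation lemma (K4) -/

lemma k4T (hS : IsTree rS) (hT : IsTree rT) :
    ∀ (n : ℕ) {s : A} {t : B} {ts : Multiset B} {xs : Multiset (A × B)},
      upTuple rT t ts → ReachN rS rT n {(s, t)} xs → (∀ w ∈ xs, w.2 ≠ t) →
      ∃ f : B → Multiset (A × B), (ts.map f).sum = xs ∧
        ∀ b ∈ ts, Reach rS rT {(s, b)} (f b) := by
  intro n
  induction n using Nat.strong_induction_on with
  | _ n ihn =>
    intro s t ts xs hup hre hw
    cases hre with
    | refl => exact absurd rfl (hw (s, t) (by simp))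
    | @head n' _ ws _ hstep hr =>
      have hinvws : PInv rS rT ws := pinv_step hS hT hstep (pinv_singleton _)
      obtain ⟨f₁, g₁, hsum, hlen, hreB⟩ := split hS hT hr hinvws
      rcases tstep_singleton hstep with ⟨as, hupS, hwseq⟩ | ⟨bs, hupT, hwseq⟩
      · -- first step on the S side; recurse
        subst hwseq
        have hch : ∀ w : A × B, ∃ f : B → Multiset (A × B),
            w ∈ as.map (fun a' => (a', (s, t).2)) →
            ((ts.map f).sum = f₁ w ∧ ∀ b ∈ ts, Reach rS rT {(w.1, b)} (f b)) := by
          intro w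
          by_cases hwmem : w ∈ as.map (fun a' => (a', (s, t).2))
          · obtain ⟨a, ha, rfl⟩ := Multiset.mem_map.1 hwmem
            have hlt : g₁ (a, (s, t).2) < n' + 1 := by
              have h1 : g₁ (a, (s, t).2) ≤ ((as.map (fun a' => (a', (s, t).2))).map g₁).sum :=
                Multiset.single_le_sum (fun _ _ => Nat.zero_le _) _
                  (Multiset.mem_map_of_mem g₁ hwmem)
              omega
            have hcond : ∀ v ∈ f₁ (a, (s, t).2), v.2 ≠ t :=
              fun v hv => hw v (mem_of_block hsum hwmem hv)
            obtain ⟨f, hf1, hf2⟩ := ihn _ hlt hup (hreB _ hwmem) hcond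
            exact ⟨f, fun _ => ⟨hf1, hf2⟩⟩
          · exact ⟨fun _ => 0, fun h => absurd h hwmem⟩
        choose F hF using hch
        refine ⟨fun b => ((as.map (fun a' => (a', (s, t).2))).map (fun w => F w b)).sum, ?_, ?_⟩
        · rw [← (msum_comm (as.map (fun a' => (a', (s, t).2))) ts (fun w b => F w b))]
          rw [Multiset.map_congr rfl (fun w hw' => (hF w hw').1)]
          exact hsum
        · intro b hb
          refine reach_trans (ys := as.map (fun a' => (a', b)))
            ⟨1, ReachN.head ⟨s, b, 0, by simp, Or.inl ⟨as, hupS, by simp⟩⟩ (ReachN.refl _)⟩ ?_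
          set p : Multiset (Multiset (A × B) × (A × B)) :=
            as.map (fun a => (F (a, (s, t).2) b, (a, b))) with hp
          have h1 : p.map Prod.snd = as.map (fun a' => (a', b)) := by
            simp [hp, Multiset.map_map, Function.comp_def]
          have h2 : (p.map Prod.fst).sum
              = ((as.map (fun a' => (a', (s, t).2))).map (fun w => F w b)).sum := by
            simp [hp, Multiset.map_map, Function.comp_def]
          have h3 := reach_pairs (rS := rS) (rT := rT) p ?_
          · rw [h1, h2] at h3; exact h3
          · intro q hq
            rcases Multiset.mem_map.1 hq with ⟨a, ha, rfl⟩
            exact (hF (a, (s, t).2)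
              (Multiset.mem_map_of_mem _ ha)).2 b hb
      · -- first step on the T side; done by splitting
        have hbs : bs = ts := upTuple_unique hT hupT hup
        subst hbs hwseq
        refine ⟨fun b => f₁ ((s, t).1, b), ?_, ?_⟩
        · rw [← hsum, Multiset.map_map]; rfl
        · intro b hb
          exact ⟨g₁ ((s, t).1, b), hreB _ (Multiset.mem_map_of_mem _ hb)⟩

lemma k4S (hS : IsTree rS) (hT : IsTree rT) :
    ∀ (n : ℕ) {s : A} {t : B} {ss : Multiset A} {xs : Multiset (A × B)},
      upTuple rS s ss → ReachN rS rT n {(s, t)} xs → (∀ w ∈ xs, w.1 ≠ s) →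
      ∃ f : A → Multiset (A × B), (ss.map f).sum = xs ∧
        ∀ a ∈ ss, Reach rS rT {(a, t)} (f a) := by
  intro n s t ss xs hup hre hw
  have hre' : ReachN rT rS n {(t, s)} (xs.map Prod.swap) := by
    have := reachN_swap hre
    simpa using this
  obtain ⟨f, hf1, hf2⟩ := k4T (rS := rT) (rT := rS) hT hS n hup hre'
    (by intro w hw'; rcases Multiset.mem_map.1 hw' with ⟨v, hv, rfl⟩; exact hw v hv)
  refine ⟨fun a => (f a).map Prod.swap, ?_, ?_⟩
  · rw [show ss.map (fun a => (f a).map Prod.swap)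
        = (ss.map f).map (Multiset.map Prod.swap) from by rw [Multiset.map_map]; rfl]
    rw [← map_msum, hf1, Multiset.map_map]
    simp
  · intro a ha
    have := reach_swap (hf2 a ha)
    simpa using this

/-! ### the factorization lemma (K3) -/

lemma k3_assemble (hS : IsTree rS) (hT : IsTree rT) {m' : ℕ}
    {zs xs ys : Multiset (A × B)}
    (IH : ∀ k, k ≤ m' → ∀ {n : ℕ} {x : A × B} {xs ys : Multiset (A × B)},
      ReachN rS rT n {x} xs → ReachN rS rT k {x} ys →
      (∀ w ∈ xs, ∃ y ∈ ys, grle rS rT w y) →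
      ∃ P : Multiset (Multiset (A × B) × (A × B)), P.map Prod.snd = ys ∧
        (P.map Prod.fst).sum = xs ∧ ∀ q ∈ P, Reach rS rT {q.2} q.1)
    (hzs : PInv rS rT zs)
    {fx fy : A × B → Multiset (A × B)} {gy : A × B → ℕ}
    (hfx : (zs.map fx).sum = xs) (hfy : (zs.map fy).sum = ys)
    (hgy : (zs.map gy).sum ≤ m')
    (hRx : ∀ z ∈ zs, Reach rS rT {z} (fx z))
    (hRy : ∀ z ∈ zs, ReachN rS rT (gy z) {z} (fy z))
    (hdom : ∀ w ∈ xs, ∃ y ∈ ys, grle rS rT w y) :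
    ∃ P : Multiset (Multiset (A × B) × (A × B)), P.map Prod.snd = ys ∧
      (P.map Prod.fst).sum = xs ∧ ∀ q ∈ P, Reach rS rT {q.2} q.1 := by
  have hdz : ∀ z ∈ zs, ∀ w ∈ fx z, ∃ y ∈ fy z, grle rS rT w y := by
    intro z hz w hw
    obtain ⟨y, hy, hwy⟩ := hdom w (mem_of_block hfx hz hw)
    rw [← hfy] at hy
    obtain ⟨sy, hsy, hysy⟩ := mem_msum.1 hy
    obtain ⟨z', hz', rfl⟩ := Multiset.mem_map.1 hsy
    have hwz : grle rS rT w z := by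
      rcases hRx z hz with ⟨n0, h0⟩
      obtain ⟨zz, hzz, hh⟩ := reachN_grle hS hT h0 w hw
      rw [Multiset.mem_singleton.1 hzz] at hh; exact hh
    have hyz' : grle rS rT y z' := by
      obtain ⟨zz, hzz, hh⟩ := reachN_grle hS hT (hRy z' hz') y hysy
      rw [Multiset.mem_singleton.1 hzz] at hh; exact hh
    have hzeq : z = z' := by
      by_contra hne
      rcases hzs.2 z hz z' hz' hne with ⟨h1, h2⟩ | ⟨h1, h2⟩
      · have c1 : descends rS w.1 z.1 := hwz.1
        have c2 : descends rS w.1 z'.1 :=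
          descends_trans hS.1.1.2 hS.1.1.1 hwy.1 hyz'.1
        rcases comparable_of_common_below hS c1 c2 with h | h
        · exact h1 h
        · exact h2 h
      · have c1 : descends rT w.2 z.2 := hwz.2
        have c2 : descends rT w.2 z'.2 :=
          descends_trans hT.1.1.2 hT.1.1.1 hwy.2 hyz'.2
        rcases comparable_of_common_below hT c1 c2 with h | h
        · exact h1 h
        · exact h2 h
    exact ⟨y, hzeq ▸ hysy, hwy⟩
  have hch : ∀ z : A × B, ∃ P : Multiset (Multiset (A × B) × (A × B)), z ∈ zs →
      (P.map Prod.snd = fy z ∧ (P.map Prod.fst).sum = fx z ∧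
        ∀ q ∈ P, Reach rS rT {q.2} q.1) := by
    intro z
    by_cases hz : z ∈ zs
    · rcases hRx z hz with ⟨n0, h0⟩
      have hgyz : gy z ≤ m' :=
        le_trans (Multiset.single_le_sum (fun _ _ => Nat.zero_le _) _
          (Multiset.mem_map_of_mem gy hz)) hgy
      obtain ⟨P, h⟩ := IH (gy z) hgyz h0 (hRy z hz) (hdz z hz)
      exact ⟨P, fun _ => h⟩
    · exact ⟨0, fun h => absurd h hz⟩
  choose PZ hPZ using hch
  refine ⟨(zs.map PZ).sum, ?_, ?_, ?_⟩
  · rw [map_msum, Multiset.map_map, ← hfy]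
    congr 1
    exact Multiset.map_congr rfl (fun z hz => (hPZ z hz).1)
  · rw [map_msum, Multiset.map_map, sum_msum, Multiset.map_map, ← hfx]
    congr 1
    exact Multiset.map_congr rfl (fun z hz => (hPZ z hz).2.1)
  · intro q hq
    obtain ⟨sq, hsq, hqsq⟩ := mem_msum.1 hq
    obtain ⟨z, hz, rfl⟩ := Multiset.mem_map.1 hsq
    exact (hPZ z hz).2.2 q hqsq

lemma k3 (hS : IsTree rS) (hT : IsTree rT) :
    ∀ (m : ℕ) {n : ℕ} {x : A × B} {xs ys : Multiset (A × B)},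
      ReachN rS rT n {x} xs → ReachN rS rT m {x} ys →
      (∀ w ∈ xs, ∃ y ∈ ys, grle rS rT w y) →
      ∃ P : Multiset (Multiset (A × B) × (A × B)), P.map Prod.snd = ys ∧
        (P.map Prod.fst).sum = xs ∧ ∀ q ∈ P, Reach rS rT {q.2} q.1 := by
  intro m
  induction m using Nat.strong_induction_on with
  | _ m ihm =>
    intro n x xs ys hxs hys hdom
    by_cases hys1 : ys = {x}
    · subst hys1
      refine ⟨{(xs, x)}, by simp, by simp, ?_⟩
      intro q hq
      rw [Multiset.mem_singleton.1 hq]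
      exact ⟨n, hxs⟩
    · have hxs1 : xs ≠ {x} := by
        rintro rfl
        obtain ⟨y, hy, hxy⟩ := hdom x (by simp)
        have hyx := reachN_strict hS hT hys hys1 y hy
        exact hyx.2 (grle_antisymm hS hT hyx.1 hxy)
      cases hys with
      | refl => exact absurd rfl hys1
      | @head m' _ ws' _ hstep' hr' =>
      cases hxs with
      | refl => exact absurd rfl hxs1
      | @head n' _ ws _ hstep hr =>
        have hIH : ∀ k, k ≤ m' → ∀ {n0 : ℕ} {x0 : A × B} {xs0 ys0 : Multiset (A × B)},
            ReachN rS rT n0 {x0} xs0 → ReachN rS rT k {x0} ys0 →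
            (∀ w ∈ xs0, ∃ y ∈ ys0, grle rS rT w y) →
            ∃ P : Multiset (Multiset (A × B) × (A × B)), P.map Prod.snd = ys0 ∧
              (P.map Prod.fst).sum = xs0 ∧ ∀ q ∈ P, Reach rS rT {q.2} q.1 :=
          fun k hk => ihm k (by omega)
        have hinvws' : PInv rS rT ws' := pinv_step hS hT hstep' (pinv_singleton _)
        obtain ⟨fy, gy, hfy, hgy, hRy⟩ := split hS hT hr' hinvws'
        by_cases hzz : ws = ws'
        · subst hzz
          have hinvws : PInv rS rT ws := hinvws'
          obtain ⟨fx, gx, hfx, _, hRx⟩ := split hS hT hr hinvws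
          exact k3_assemble hS hT hIH hinvws hfx hfy hgy
            (fun z hz => ⟨gx z, hRx z hz⟩) hRy hdom
        · rcases tstep_singleton hstep with ⟨as, hupS, hws⟩ | ⟨bs, hupT, hws⟩ <;>
            rcases tstep_singleton hstep' with ⟨as', hupS', hws'⟩ | ⟨bs', hupT', hws'⟩
          · exact absurd (by rw [hws, hws', upTuple_unique hS hupS hupS']) hzz
          · -- xs-side S step, ys-side T step : use k4T on the xs path
            have hw2 : ∀ w ∈ xs, w.2 ≠ x.2 := by
              intro w hw
              obtain ⟨y, hy, hwy⟩ := hdom w hw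
              obtain ⟨z'', hz'', hyz''⟩ := reachN_grle hS hT hr' y hy
              rw [hws'] at hz''
              obtain ⟨b, hb, rfl⟩ := Multiset.mem_map.1 hz''
              intro hwt
              have hd1 : descends rT x.2 b := by
                have := descends_trans hT.1.1.2 hT.1.1.1 hwy.2 hyz''.2
                rwa [hwt] at this
              have hd2 : descends rT b x.2 := mem_up_descends hupT' hb
              have := descends_antisymm hT.1 hT.2.2.1 hd1 hd2
              exact not_mem_upTuple hT.1.1.2 hT.1.1.1 hT.2.2.1 hupT' (this ▸ hb)
            have hxs' : ReachN rS rT (n' + 1) {(x.1, x.2)} xs := by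
              rw [Prod.mk.eta]; exact ReachN.head hstep hr
            obtain ⟨f, hf1, hf2⟩ := k4T hS hT (n' + 1) hupT' hxs' hw2
            refine k3_assemble hS hT hIH hinvws' (fx := fun z => f z.2) (fy := fy)
              (gy := gy) ?_ hfy hgy ?_ hRy hdom
            · rw [hws', Multiset.map_map, Function.comp_def]
              exact hf1
            · intro z hz
              rw [hws'] at hz
              obtain ⟨b, hb, rfl⟩ := Multiset.mem_map.1 hz
              exact hf2 b hb
          · -- xs-side T step, ys-side S step : use k4S on the xs path
            have hw1 : ∀ w ∈ xs, w.1 ≠ x.1 := by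
              intro w hw
              obtain ⟨y, hy, hwy⟩ := hdom w hw
              obtain ⟨z'', hz'', hyz''⟩ := reachN_grle hS hT hr' y hy
              rw [hws'] at hz''
              obtain ⟨a, ha, rfl⟩ := Multiset.mem_map.1 hz''
              intro hwt
              have hd1 : descends rS x.1 a := by
                have := descends_trans hS.1.1.2 hS.1.1.1 hwy.1 hyz''.1
                rwa [hwt] at this
              have hd2 : descends rS a x.1 := mem_up_descends hupS' ha
              have := descends_antisymm hS.1 hS.2.2.1 hd1 hd2
              exact not_mem_upTuple hS.1.1.2 hS.1.1.1 hS.2.2.1 hupS' (this ▸ ha)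
            have hxs' : ReachN rS rT (n' + 1) {(x.1, x.2)} xs := by
              rw [Prod.mk.eta]; exact ReachN.head hstep hr
            obtain ⟨f, hf1, hf2⟩ := k4S hS hT (n' + 1) hupS' hxs' hw1
            refine k3_assemble hS hT hIH hinvws' (fx := fun z => f z.1) (fy := fy)
              (gy := gy) ?_ hfy hgy ?_ hRy hdom
            · rw [hws', Multiset.map_map, Function.comp_def]
              exact hf1
            · intro z hz
              rw [hws'] at hz
              obtain ⟨a, ha, rfl⟩ := Multiset.mem_map.1 hz
              exact hf2 a ha
          · exact absurd (by rw [hws, hws', upTuple_unique hT hupT hupT']) hzz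

end Tensor


/-! ### lifting partitions along a map -/

section Lift
attribute [local instance] Classical.propDecidable

lemma map_eq_add_split {φ : Z → Y} :
    ∀ (m₁ : Multiset Y) {m₂ : Multiset Y} {c : Multiset Z}, c.map φ = m₁ + m₂ →
      ∃ c₁ c₂, c = c₁ + c₂ ∧ c₁.map φ = m₁ ∧ c₂.map φ = m₂ := by
  intro m₁
  induction m₁ using Multiset.induction_on with
  | empty => intro m₂ c h; exact ⟨0, c, by simp, by simp, by simpa using h⟩
  | cons a m₁ ih =>
      intro m₂ c h
      rw [Multiset.cons_add] at h
      obtain ⟨w, hw, hfw, hrest⟩ := (Multiset.map_eq_cons φ c (m₁ + m₂) a).2 h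
      obtain ⟨c₁, c₂, hc, h1, h2⟩ := ih hrest
      refine ⟨w ::ₘ c₁, c₂, ?_, by simp [hfw, h1], h2⟩
      rw [Multiset.cons_add, ← hc, Multiset.cons_erase hw]

lemma lift_partition {φ : Z → A × B} :
    ∀ (gs : Multiset Z) (P : Multiset (Multiset (A × B) × (A × B))) (us : Multiset Z),
      P.map Prod.snd = gs.map φ → (P.map Prod.fst).sum = us.map φ →
      ∃ P' : Multiset (Multiset Z × Z), P'.map Prod.snd = gs ∧
        (P'.map Prod.fst).sum = us ∧
        ∀ q' ∈ P', ∃ q ∈ P, q.1 = q'.1.map φ ∧ q.2 = φ q'.2 := by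
  intro gs
  induction gs using Multiset.induction_on with
  | empty =>
      intro P us hsnd hsum
      simp only [Multiset.map_zero] at hsnd
      have hP : P = 0 := by simpa using (Multiset.map_eq_zero.1 hsnd)
      subst hP
      simp only [Multiset.map_zero, Multiset.sum_zero] at hsum
      have : us = 0 := Multiset.map_eq_zero.1 hsum.symm
      subst this
      exact ⟨0, by simp, by simp, by simp⟩
  | cons v gs ih =>
      intro P us hsnd hsum
      rw [Multiset.map_cons] at hsnd
      obtain ⟨q, hq, hq2, hrest⟩ := (Multiset.map_eq_cons Prod.snd P (gs.map φ) (φ v)).2 hsnd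
      have hPq : P = q ::ₘ P.erase q := (Multiset.cons_erase hq).symm
      rw [hPq, Multiset.map_cons, Multiset.sum_cons] at hsum
      obtain ⟨c₁, c₂, hc, h1, h2⟩ := map_eq_add_split q.1 hsum.symm
      obtain ⟨P'', hsnd'', hsum'', hblocks''⟩ := ih (P.erase q) c₂ hrest h2.symm
      refine ⟨(c₁, v) ::ₘ P'', by simp [hsnd''], ?_, ?_⟩
      · rw [Multiset.map_cons, Multiset.sum_cons, hsum'', ← hc]
      · intro q' hq'
        rcases Multiset.mem_cons.1 hq' with rfl | hq''
        · exact ⟨q, hq, h1.symm, hq2⟩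
        · obtain ⟨q0, hq0, hh⟩ := hblocks'' q' hq''
          exact ⟨q0, Multiset.mem_of_mem_erase hq0, hh⟩

end Lift

section Main

variable {rS : Rel A} {rT : Rel B}

lemma hom_descends (hS : IsTree rS) (hT : IsTree rT) {φ : Z → A × B} {rU : Rel Z}
    (hhom : BroadHom rU (tensorRel rS rT) φ)
    {v u : Z} (h : descends rU v u) : grle rS rT (φ v) (φ u) := by
  rcases h with ⟨fs, hfs, hv⟩
  obtain ⟨n, hre⟩ := reach_of_tensorRel hS hT (hhom fs u hfs)
  obtain ⟨z, hz, hg⟩ := reachN_grle hS hT hre (φ v) (Multiset.mem_map_of_mem φ hv)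
  rw [Multiset.mem_singleton.1 hz] at hg
  exact hg

lemma main_backward (hS : IsTree rS) (hT : IsTree rT) {rU : Rel Z} (hU : IsTree rU)
    {φ : Z → A × B} (hinj : Function.Injective φ)
    (hhom : BroadHom rU (tensorRel rS rT) φ)
    (hleaf : ∀ l, IsLeaf rU l → ¬ tensorRel rS rT 0 (φ l)) :
    ∀ (u : Z) (us : Multiset Z), tensorRel rS rT (us.map φ) (φ u) → rU us u := by
  intro u
  induction u using (sdes_wf hU).induction with
  | _ u ihu =>
    intro us hrel
    by_cases htriv : us.map φ = {φ u}
    · obtain ⟨v, hv1, hv2⟩ := Multiset.map_eq_singleton.1 htriv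
      rw [hv1, hinj hv2]
      exact hU.1.1.1 u
    · obtain ⟨n, hre⟩ := reach_of_tensorRel hS hT hrel
      have hstrict := reachN_strict hS hT hre htriv
      have hbelow : ∀ v ∈ us, descends rU v u ∧ v ≠ u := by
        intro v hv
        obtain ⟨hgle, hne⟩ := hstrict (φ v) (Multiset.mem_map_of_mem φ hv)
        have hvneu : v ≠ u := fun h => hne (congrArg φ h)
        refine ⟨?_, hvneu⟩
        by_cases hdvu : descends rU v u
        · exact hdvu
        · exfalso
          by_cases hduv : descends rU u v
          · exact hne ((grle_antisymm hS hT (hom_descends hS hT hhom hduv) hgle).symm)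
          · obtain ⟨rest, w, f, g, hrelw, huf, hvg⟩ := branching hU hduv hdvu
            obtain ⟨n₂, hre₂⟩ := reach_of_tensorRel hS hT (hhom _ w hrelw)
            have hpinv := pinv_reachN hS hT hre₂ (pinv_singleton (φ w))
            have hfg : φ f ≠ φ g := by
              intro h
              have hnd := hpinv.1
              rw [Multiset.map_cons, Multiset.map_cons] at hnd
              exact (Multiset.nodup_cons.1 hnd).1 (by rw [h]; exact Multiset.mem_cons_self _ _)
            have hmf : φ f ∈ (f ::ₘ g ::ₘ rest).map φ := by simp
            have hmg : φ g ∈ (f ::ₘ g ::ₘ rest).map φ := by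
              simp only [Multiset.map_cons]
              exact Multiset.mem_cons_of_mem (Multiset.mem_cons_self _ _)
            have hvf : grle rS rT (φ v) (φ f) :=
              grle_trans hS hT hgle (hom_descends hS hT hhom huf)
            have hvg' : grle rS rT (φ v) (φ g) := hom_descends hS hT hhom hvg
            rcases hpinv.2 (φ f) hmf (φ g) hmg hfg with ⟨h1, h2⟩ | ⟨h1, h2⟩
            · rcases comparable_of_common_below hS hvf.1 hvg'.1 with h | h
              · exact h1 h
              · exact h2 h
            · rcases comparable_of_common_below hT hvf.2 hvg'.2 with h | h
              · exact h1 h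
              · exact h2 h
      have hnotleaf : ¬ IsLeaf rU u := by
        intro hl
        by_cases hus : us = 0
        · subst hus
          exact hleaf u hl (by simpa using hrel)
        · obtain ⟨v, hv⟩ := Multiset.exists_mem_of_ne_zero hus
          obtain ⟨hd, hne⟩ := hbelow v hv
          rcases hd with ⟨fs, hfs, hvfs⟩
          exact hl ⟨fs, hfs, fun h => hne (by rw [h] at hvfs; simpa using hvfs)⟩
      obtain ⟨gs, hup⟩ : ∃ gs, upTuple rU u gs := (hU.2.2.2.1 u).resolve_left hnotleaf
      have hdom : ∀ w ∈ us.map φ, ∃ y ∈ gs.map φ, grle rS rT w y := by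
        intro w hw
        obtain ⟨v, hv, rfl⟩ := Multiset.mem_map.1 hw
        obtain ⟨hd, hne⟩ := hbelow v hv
        obtain ⟨g, hg, hdg⟩ := descends_up hU.1.1.2 hU.1.1.1 hup hd hne
        exact ⟨φ g, Multiset.mem_map_of_mem φ hg, hom_descends hS hT hhom hdg⟩
      obtain ⟨m, hreg⟩ := reach_of_tensorRel hS hT (hhom gs u hup.1.1)
      obtain ⟨P, hPsnd, hPsum, hPreach⟩ := k3 hS hT m hre hreg hdom
      obtain ⟨P', hP'snd, hP'sum, hP'q⟩ := lift_partition gs P us hPsnd hPsum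
      have hq : ∀ q' ∈ P', rU q'.1 q'.2 := by
        intro q' hq'
        obtain ⟨q, hqP, hq1, hq2⟩ := hP'q q' hq'
        have hmem : q'.2 ∈ gs := by
          rw [← hP'snd]; exact Multiset.mem_map_of_mem Prod.snd hq'
        refine ihu q'.2 ⟨mem_up_descends hup hmem,
          fun h => not_mem_upTuple hU.1.1.2 hU.1.1.1 hU.2.2.1 hup (h ▸ hmem)⟩ q'.1 ?_
        have := tensorRel_of_reach (hPreach q hqP)
        rw [hq1, hq2] at this
        exact this
      have hfin := hU.1.1.2 P' u (by rw [hP'snd]; exact hup.1.1) hq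
      rwa [hP'sum] at hfin

end Main

/-- A subtree `U ↪ S ⊗ T` is full (every broad relation of
`S ⊗ T` among its elements holds in `U`) iff no leaf `l` of `U` satisfies
`ε ≤ φ l` in `S ⊗ T`. -/
theorem stmt16 {A B Z : Type u} (rS : Rel A) (rT : Rel B) (rU : Rel Z)
    (hS : IsTree rS) (hT : IsTree rT) (hU : IsTree rU)
    (φ : Z → A × B) (hinj : Function.Injective φ)
    (hhom : BroadHom rU (tensorRel rS rT) φ) :
    (∀ us u, tensorRel rS rT (us.map φ) (φ u) → rU us u) ↔
      ∀ l, IsLeaf rU l → ¬ tensorRel rS rT 0 (φ l) := by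
  constructor
  · intro hfull l hl hrel
    have h0 : tensorRel rS rT ((0 : Multiset Z).map φ) (φ l) := by simpa using hrel
    exact hl ⟨0, hfull 0 l h0, by simp⟩
  · intro hleaf us u hrel
    exact main_backward hS hT hU hinj hhom hleaf u us hrel

end BroadPaper
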